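/- Let c > 0, let R = diag(r_1, …, r_m) with all r_j > 0, let B ∈ ℝ^{N×m}, and let g ∈ ℝ^N. Define D = (1/(2c))·R⁻¹·Bᵀ·g ∈ ℝ^m and u* ∈ ℝ^m with components u*_j = −c·tanh(D_j), and let U(u*) = 2 Σ_{j=1}^m r_j ∫_0^{u*_j} c·artanh(ν/c) dν. Then U(u*) + gᵀ(B·u*) = c² Σ_{j=1}^m r_j·log(1 − tanh²(D_j)). -/

import Mathlib

open Matrix

/-- The inverse hyperbolic tangent: `artanh x = ½ log((1 + x)/(1 − x))`. -/
noncomputable def artanh (x : ℝ) : ℝ := Real.log ((1 + x) / (1 - x)) / 2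

lemma tanh_sq_lt_one (d : ℝ) : Real.tanh d ^ 2 < 1 := by
  have hc := Real.cosh_pos d
  have h1 : Real.sinh d ^ 2 < Real.cosh d ^ 2 := by
    have := Real.cosh_sq_sub_sinh_sq d; nlinarith
  rw [Real.tanh_eq_sinh_div_cosh, div_pow, div_lt_one (by positivity)]
  exact h1

lemma artanh_tanh (d : ℝ) : artanh (Real.tanh d) = d := by
  have hc := Real.cosh_pos d
  have h1 : 1 + Real.tanh d = Real.exp d / Real.cosh d := by
    rw [Real.tanh_eq_sinh_div_cosh, ← Real.cosh_add_sinh]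
    field_simp
  have h2 : 1 - Real.tanh d = Real.exp (-d) / Real.cosh d := by
    rw [Real.tanh_eq_sinh_div_cosh, ← Real.cosh_sub_sinh]
    field_simp
  have h3 : (1 + Real.tanh d) / (1 - Real.tanh d) = Real.exp (2 * d) := by
    rw [h1, h2, div_div_div_cancel_right₀, ← Real.exp_sub]
    · ring_nf
    · exact hc.ne'
  rw [artanh, h3, Real.log_exp]; ring

lemma artanh_zero : artanh 0 = 0 := by simp [artanh]

lemma hasDerivAt_artanh {x : ℝ} (h : x ^ 2 < 1) :
    HasDerivAt artanh (1 / (1 - x ^ 2)) x := by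
  have hx1 : 0 < 1 + x := by nlinarith
  have hx2 : 0 < 1 - x := by nlinarith
  have h1 : HasDerivAt (fun y : ℝ => Real.log (1 + y)) (1 / (1 + x)) x := by
    have := ((hasDerivAt_id x).const_add 1).log (by simp only [id_eq]; linarith)
    simpa using this
  have h2 : HasDerivAt (fun y : ℝ => Real.log (1 - y)) (-(1 / (1 - x))) x := by
    have := ((hasDerivAt_id x).const_sub 1).log (by simp only [id_eq]; linarith)
    simpa [div_eq_mul_inv] using this
  have h3 : HasDerivAt (fun y : ℝ => (Real.log (1 + y) - Real.log (1 - y)) / 2)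
      ((1 / (1 + x) + 1 / (1 - x)) / 2) x := by
    have := (h1.sub h2).div_const 2
    simpa [sub_neg_eq_add] using this
  have heq : (fun y : ℝ => (Real.log (1 + y) - Real.log (1 - y)) / 2) =ᶠ[nhds x] artanh := by
    have hs : ∀ᶠ y in nhds x, 0 < 1 + y ∧ 0 < 1 - y := by
      have o1 : ∀ᶠ y in nhds x, 0 < 1 + y :=
        (isOpen_lt continuous_const (continuous_const.add continuous_id)).eventually_mem
          (by simpa using hx1)
      have o2 : ∀ᶠ y in nhds x, 0 < 1 - y :=
        (isOpen_lt continuous_const (continuous_const.sub continuous_id)).eventually_mem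
          (by simpa using hx2)
      exact o1.and o2
    filter_upwards [hs] with y hy
    rw [artanh, Real.log_div (by linarith [hy.1]) (by linarith [hy.2])]
  have hval : (1 / (1 + x) + 1 / (1 - x)) / 2 = 1 / (1 - x ^ 2) := by
    have ha := hx1.ne'
    have hb := hx2.ne'
    have hsq : (1 : ℝ) - x ^ 2 = (1 + x) * (1 - x) := by ring
    rw [hsq]
    field_simp
    ring
  exact hval ▸ h3.congr_of_eventuallyEq heq.symm

lemma key_integral (c : ℝ) (hc : 0 < c) (e : ℝ) :
    (∫ ν in (0:ℝ)..(c * Real.tanh e), c * artanh (ν / c)) =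
      c ^ 2 * (Real.tanh e * e + Real.log (1 - Real.tanh e ^ 2) / 2) := by
  set t := Real.tanh e with ht
  have htsq : t ^ 2 < 1 := tanh_sq_lt_one e
  have habs : |t| < 1 := (sq_lt_one_iff_abs_lt_one t).mp htsq
  -- derivative facts on the interval
  have hmem : ∀ ν ∈ Set.uIcc (0:ℝ) (c * t), (ν / c) ^ 2 < 1 := by
    intro ν hν
    have h1 : |ν| ≤ |c * t| := by
      rcases Set.mem_uIcc.mp hν with h | h
      · rw [abs_mul, abs_of_pos hc]
        rcases abs_cases t with ⟨he, _⟩ | ⟨he, _⟩ <;>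
          [rw [he]; rw [he]] <;> cases abs_cases ν <;> nlinarith [h.1, h.2]
      · rw [abs_mul, abs_of_pos hc]
        rcases abs_cases t with ⟨he, _⟩ | ⟨he, _⟩ <;>
          [rw [he]; rw [he]] <;> cases abs_cases ν <;> nlinarith [h.1, h.2]
    have h2 : |ν / c| < 1 := by
      rw [abs_div, abs_of_pos hc, div_lt_one hc]
      calc |ν| ≤ |c * t| := h1
        _ = c * |t| := by rw [abs_mul, abs_of_pos hc]
        _ < c * 1 := by exact mul_lt_mul_of_pos_left habs hc
        _ = c := mul_one c
    exact (sq_lt_one_iff_abs_lt_one _).mpr h2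
  set F : ℝ → ℝ := fun ν => c * ν * artanh (ν / c) + (c ^ 2 / 2) * Real.log (1 - (ν / c) ^ 2)
    with hF
  have hderiv : ∀ ν ∈ Set.uIcc (0:ℝ) (c * t), HasDerivAt F (c * artanh (ν / c)) ν := by
    intro ν hν
    have hsq := hmem ν hν
    have hdiv : HasDerivAt (fun y : ℝ => y / c) (1 / c) ν := by
      simpa [div_eq_mul_inv] using (hasDerivAt_id ν).mul_const c⁻¹
    have hA : HasDerivAt (fun y : ℝ => artanh (y / c)) ((1 / (1 - (ν / c) ^ 2)) * (1 / c)) ν :=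
      by have := (hasDerivAt_artanh hsq).comp ν hdiv; exact this
    have hB : HasDerivAt (fun y : ℝ => c * y * artanh (y / c))
        (c * artanh (ν / c) + c * ν * ((1 / (1 - (ν / c) ^ 2)) * (1 / c))) ν := by
      have := (((hasDerivAt_id ν).const_mul c).mul hA)
      refine this.congr_deriv ?_
      simp only [id_eq]
      ring
    have hpos : 0 < 1 - (ν / c) ^ 2 := by linarith
    have hC : HasDerivAt (fun y : ℝ => (c ^ 2 / 2) * Real.log (1 - (y / c) ^ 2))
        ((c ^ 2 / 2) * ((-(2 * (ν / c) * (1 / c))) / (1 - (ν / c) ^ 2))) ν := by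
      have hin : HasDerivAt (fun y : ℝ => 1 - (y / c) ^ 2) (-(2 * (ν / c) * (1 / c))) ν := by
        have := ((hdiv.pow 2).const_sub 1)
        refine this.congr_deriv ?_
        ring
      exact (hin.log (by linarith)).const_mul _
    have := hB.add hC
    refine this.congr_deriv ?_
    have hc' : c ≠ 0 := hc.ne'
    obtain ⟨y, rfl⟩ : ∃ y, ν = c * y := ⟨ν / c, by field_simp⟩
    have hyc : c * y / c = y := by field_simp
    rw [hyc] at hpos ⊢
    have h1 : (1 : ℝ) - y ^ 2 ≠ 0 := hpos.ne'
    field_simp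
    ring
  have hcont : ContinuousOn (fun ν => c * artanh (ν / c)) (Set.uIcc (0:ℝ) (c * t)) := by
    intro ν hν
    have hsq := hmem ν hν
    have hdiv : HasDerivAt (fun y : ℝ => y / c) (1 / c) ν := by
      simpa [div_eq_mul_inv] using (hasDerivAt_id ν).mul_const c⁻¹
    exact (((hasDerivAt_artanh hsq).comp ν hdiv).continuousAt.const_smul c).continuousWithinAt
  have hint := intervalIntegral.integral_eq_sub_of_hasDerivAt hderiv
    (hcont.intervalIntegrable)
  rw [hint]
  have hF0 : F 0 = 0 := by simp [hF, artanh_zero]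
  have hFt : F (c * t) = c ^ 2 * (t * artanh t + Real.log (1 - t ^ 2) / 2) := by
    have : c * t / c = t := by field_simp
    rw [hF]; simp only [this]; ring
  rw [hF0, hFt, ht, artanh_tanh]
  ring

/-- cancellation identity converting the Hamiltonian (eq. 21) into the
HJI equation (eq. 29): with `D = (1/(2c)) R⁻¹ Bᵀ g` and `u*_j = −c·tanh(D_j)`,
`U(u*) + gᵀ(B u*) = c² ∑_j r_j log(1 − tanh²(D_j))`. -/
theorem stmt_15 (m N : ℕ) (c : ℝ) (hc : 0 < c) (r : Fin m → ℝ) (hr : ∀ j, 0 < r j)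
    (B : Matrix (Fin N) (Fin m) ℝ) (g : Fin N → ℝ) :
    letI D : Fin m → ℝ := (1 / (2 * c)) • ((Matrix.diagonal r)⁻¹ *ᵥ (Bᵀ *ᵥ g))
    letI ustar : Fin m → ℝ := fun j => -c * Real.tanh (D j)
    2 * ∑ j, r j * (∫ ν in (0:ℝ)..(ustar j), c * artanh (ν / c)) + g ⬝ᵥ (B *ᵥ ustar) =
      c ^ 2 * ∑ j, r j * Real.log (1 - Real.tanh (D j) ^ 2) := by
  set D : Fin m → ℝ := (1 / (2 * c)) • ((Matrix.diagonal r)⁻¹ *ᵥ (Bᵀ *ᵥ g)) with hDdef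
  set ustar : Fin m → ℝ := fun j => -c * Real.tanh (D j) with hudef
  set w : Fin m → ℝ := Bᵀ *ᵥ g with hw
  have hinv : (Matrix.diagonal r)⁻¹ = Matrix.diagonal r⁻¹ := by
    apply Matrix.inv_eq_right_inv
    have h1 : (fun i => r i * r⁻¹ i) = fun _ => (1 : ℝ) := by
      funext i
      simp [mul_inv_cancel₀ (hr i).ne']
    rw [Matrix.diagonal_mul_diagonal, h1]
    exact Matrix.diagonal_one
  have hD : ∀ j, D j = w j / (2 * c * r j) := by
    intro j
    rw [hDdef]
    simp only [Pi.smul_apply, smul_eq_mul, hinv, Matrix.mulVec_diagonal, Pi.inv_apply]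
    have := (hr j).ne'
    have := hc.ne'
    field_simp
  have hwD : ∀ j, w j = 2 * c * r j * D j := by
    intro j
    rw [hD j]
    have := (hr j).ne'
    have := hc.ne'
    field_simp
  -- rewrite the dot product
  have hdot : g ⬝ᵥ (B *ᵥ ustar) = ∑ j, w j * ustar j := by
    rw [Matrix.dotProduct_mulVec, hw, Matrix.mulVec_transpose]
    rfl
  -- rewrite each integral
  have hint : ∀ j, (∫ ν in (0:ℝ)..(ustar j), c * artanh (ν / c)) =
      c ^ 2 * (Real.tanh (D j) * (D j) + Real.log (1 - Real.tanh (D j) ^ 2) / 2) := by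
    intro j
    have hu : ustar j = c * Real.tanh (-(D j)) := by
      rw [hudef, Real.tanh_neg]; ring
    rw [hu, key_integral c hc (-(D j))]
    rw [Real.tanh_neg]
    ring_nf
  simp only [hdot, hint]
  have hwu : ∀ j, w j * ustar j = -(2 * c ^ 2 * r j * (D j * Real.tanh (D j))) := by
    intro j
    rw [hudef, hwD j]; ring
  simp only [hwu]
  rw [Finset.mul_sum, Finset.mul_sum, ← Finset.sum_add_distrib]
  exact Finset.sum_congr rfl fun j _ => by ring
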